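/- If F_n is a sequence of NBUE life distributions with means μ_n bounded by M, and F_n converges in distribution to a continuous life distribution F with finite mean μ, then μ_n → μ. -/

import Mathlib

open MeasureTheory Set Filter

/-- If `Fₙ` are NBUE life distributions with bounded means converging in distribution
to a continuous life distribution `G` with finite mean `μ`, then the means converge: `μₙ → μ`. -/
theorem nbue_means_converge
    (F : ℕ → ℝ → ℝ) (μn : ℕ → ℝ) (M : ℝ)
    (hmono : ∀ n, Monotone (F n)) (hneg : ∀ n, ∀ t < (0:ℝ), F n t = 0)
    (hlim : ∀ n, Tendsto (F n) atTop (nhds 1))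
    (hintn : ∀ n, IntegrableOn (fun t => 1 - F n t) (Ioi 0))
    (hmean : ∀ n, ∫ t in Ioi (0:ℝ), (1 - F n t) = μn n)
    (hNBUE : ∀ n, ∀ t ≥ (0:ℝ), ∫ x in Ioi t, (1 - F n x) ≤ μn n * (1 - F n t))
    (hM : ∀ n, μn n ≤ M)
    (G : ℝ → ℝ) (μ : ℝ)
    (hGmono : Monotone G) (hGneg : ∀ t < (0:ℝ), G t = 0)
    (hGlim : Tendsto G atTop (nhds 1)) (hGcont : Continuous G)
    (hGint : IntegrableOn (fun t => 1 - G t) (Ioi 0))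
    (hGmean : ∫ t in Ioi (0:ℝ), (1 - G t) = μ)
    (hconv : ∀ x, Tendsto (fun n => F n x) atTop (nhds (G x))) :
    Tendsto μn atTop (nhds μ) := by
  -- basic bounds on F
  have hF0 : ∀ n x, 0 ≤ F n x := by
    intro n x
    rcases lt_or_ge x 0 with h | h
    · exact (hneg n x h).ge
    · have h1 : F n (-1) = 0 := hneg n (-1) (by norm_num)
      have := hmono n (show (-1:ℝ) ≤ x by linarith)
      linarith
  have hF1 : ∀ n x, F n x ≤ 1 := by
    intro n x
    exact ge_of_tendsto (hlim n) (eventually_atTop.2 ⟨x, fun y hy => hmono n hy⟩)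
  have hG0 : ∀ x, 0 ≤ G x := fun x =>
    ge_of_tendsto (hconv x) (Eventually.of_forall fun n => hF0 n x)
  have hG1 : ∀ x, G x ≤ 1 := fun x =>
    le_of_tendsto (hconv x) (Eventually.of_forall fun n => hF1 n x)
  -- nonnegativity of means
  have hμn0 : ∀ n, 0 ≤ μn n := by
    intro n
    rw [← hmean n]
    exact setIntegral_nonneg measurableSet_Ioi fun t _ => by linarith [hF1 n t]
  have hM0 : 0 ≤ M := le_trans (hμn0 0) (hM 0)
  -- splitting the integral
  have hsplit : ∀ n, ∀ C : ℝ, 0 ≤ C →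
      μn n = (∫ t in Ioc 0 C, (1 - F n t)) + ∫ t in Ioi C, (1 - F n t) := by
    intro n C hC
    rw [← hmean n, ← Ioc_union_Ioi_eq_Ioi hC]
    exact setIntegral_union (Ioc_disjoint_Ioi le_rfl) measurableSet_Ioi
      ((hintn n).mono_set (by rw [← Ioc_union_Ioi_eq_Ioi hC]; exact subset_union_left))
      ((hintn n).mono_set (by rw [← Ioc_union_Ioi_eq_Ioi hC]; exact subset_union_right))
  have hGsplit : ∀ C : ℝ, 0 ≤ C →
      μ = (∫ t in Ioc 0 C, (1 - G t)) + ∫ t in Ioi C, (1 - G t) := by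
    intro C hC
    rw [← hGmean, ← Ioc_union_Ioi_eq_Ioi hC]
    exact setIntegral_union (Ioc_disjoint_Ioi le_rfl) measurableSet_Ioi
      (hGint.mono_set (by rw [← Ioc_union_Ioi_eq_Ioi hC]; exact subset_union_left))
      (hGint.mono_set (by rw [← Ioc_union_Ioi_eq_Ioi hC]; exact subset_union_right))
  -- tail bound from NBUE
  have htail : ∀ n, ∀ C : ℝ, 0 < C → ∫ x in Ioi C, (1 - F n x) ≤ M ^ 2 / C := by
    intro n C hC
    have hsurv : C * (1 - F n C) ≤ μn n := by
      have h1 : ∫ t in Ioc (0:ℝ) C, (1 - F n C) ≤ ∫ t in Ioc (0:ℝ) C, (1 - F n t) := by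
        apply setIntegral_mono_on
        · exact integrableOn_const (by simp [hC])
        · exact (hintn n).mono_set (Ioc_subset_Ioi_self)
        · exact measurableSet_Ioc
        · intro t ht
          have := hmono n ht.2
          linarith
      have h2 : ∫ t in Ioc (0:ℝ) C, (1 - F n t) ≤ μn n := by
        rw [← hmean n]
        apply setIntegral_mono_set (hintn n)
        · exact Eventually.of_forall fun t => by simp; linarith [hF1 n t]
        · exact (Ioc_subset_Ioi_self).eventuallyLE
      have h3 : ∫ t in Ioc (0:ℝ) C, (1 - F n C) = C * (1 - F n C) := by
        rw [setIntegral_const]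
        simp [Real.volume_Ioc, hC.le]
      linarith
    have hFb : 1 - F n C ≤ μn n / C := by
      rw [le_div_iff₀ hC]; linarith [hsurv]
    have h4 : ∫ x in Ioi C, (1 - F n x) ≤ μn n * (1 - F n C) := hNBUE n C hC.le
    have h5 : μn n * (1 - F n C) ≤ μn n * (μn n / C) :=
      mul_le_mul_of_nonneg_left hFb (hμn0 n)
    have h6 : μn n * (μn n / C) ≤ M * (M / C) := by
      rw [mul_div_assoc', mul_div_assoc', div_le_div_iff₀ hC hC]
      nlinarith [mul_le_mul_of_nonneg_right (mul_le_mul (hM n) (hM n) (hμn0 n) hM0) hC.le]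
    have h7 : M * (M / C) = M ^ 2 / C := by ring
    linarith
  -- tail of G tends to 0
  have hGtailnn : ∀ C : ℝ, 0 ≤ ∫ t in Ioi C, (1 - G t) := fun C =>
    setIntegral_nonneg measurableSet_Ioi fun t _ => by linarith [hG1 t]
  have hGIoc : Tendsto (fun C : ℝ => ∫ t in Ioc (0:ℝ) C, (1 - G t)) atTop (nhds μ) := by
    rw [← hGmean]
    have := intervalIntegral_tendsto_integral_Ioi (0:ℝ) hGint tendsto_id
    apply this.congr'
    filter_upwards [eventually_ge_atTop (0:ℝ)] with C hC
    simp only [id_eq, intervalIntegral.integral_of_le hC]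
  -- main argument
  rw [Metric.tendsto_atTop]
  intro ε hε
  -- choose C
  have hev : ∀ᶠ C : ℝ in atTop,
      |(∫ t in Ioc (0:ℝ) C, (1 - G t)) - μ| < ε / 3 ∧ M ^ 2 / C < ε / 3 ∧ 0 < C := by
    have h1 := (hGIoc.eventually (Metric.ball_mem_nhds μ (by linarith : (0:ℝ) < ε/3)))
    have h2 : ∀ᶠ C : ℝ in atTop, M ^ 2 / C < ε / 3 := by
      filter_upwards [eventually_gt_atTop (max 0 (M ^ 2 / (ε / 3) + 1))] with C hC
      have hC0 : 0 < C := lt_of_le_of_lt (le_max_left _ _) hC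
      have hC1 : M ^ 2 / (ε / 3) < C := by
        have := lt_of_le_of_lt (le_max_right _ _) hC; linarith
      rw [div_lt_iff₀ hC0]
      have h3 : M ^ 2 < C * (ε / 3) := by
        rw [div_lt_iff₀ (by linarith : (0:ℝ) < ε/3)] at hC1
        linarith [hC1]
      linarith
    filter_upwards [h1, h2, eventually_gt_atTop (0:ℝ)] with C hC1 hC2 hC3
    exact ⟨by simpa [Real.dist_eq] using hC1, hC2, hC3⟩
  obtain ⟨C, hCclose, hCtail, hC0⟩ := hev.exists
  -- G tail small
  have hGtail : ∫ t in Ioi C, (1 - G t) < ε / 3 := by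
    have := hGsplit C hC0.le
    have habs := abs_lt.1 hCclose
    linarith [habs.1, habs.2]
  -- dominated convergence on Ioc 0 C
  have hDCT : Tendsto (fun n => ∫ t in Ioc (0:ℝ) C, (1 - F n t)) atTop
      (nhds (∫ t in Ioc (0:ℝ) C, (1 - G t))) := by
    apply tendsto_integral_of_dominated_convergence (fun _ => (1:ℝ))
    · intro n
      exact ((measurable_const.sub (hmono n).measurable).aestronglyMeasurable)
    · exact integrableOn_const (by simp [hC0])
    · intro n
      apply Eventually.of_forall
      intro t
      rw [Real.norm_eq_abs, abs_le]
      constructor <;> [linarith [hF1 n t]; linarith [hF0 n t]]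
    · apply Eventually.of_forall
      intro t
      exact tendsto_const_nhds.sub (hconv t)
  have hevN := hDCT.eventually (Metric.ball_mem_nhds _ (by linarith : (0:ℝ) < ε/3))
  rw [eventually_atTop] at hevN
  obtain ⟨N, hN⟩ := hevN
  refine ⟨N, fun n hn => ?_⟩
  have hclose := hN n hn
  simp only [Metric.mem_ball, Real.dist_eq] at hclose
  have h1 := hsplit n C hC0.le
  have h2 := hGsplit C hC0.le
  have h3 := htail n C hC0
  have h4 : 0 ≤ ∫ x in Ioi C, (1 - F n x) :=
    setIntegral_nonneg measurableSet_Ioi fun t _ => by linarith [hF1 n t]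
  have h5 := hGtailnn C
  rw [Real.dist_eq, abs_lt]
  have habs := abs_lt.1 hclose
  constructor <;> linarith [habs.1, habs.2, hCtail]
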